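/- Let T be a tournament (complete asymmetric directed graph) on a finite set Ω of candidates with at least two elements, and let A be a candidate that wins every balanced agenda under T. Then A beats every other candidate in T, and consequently A wins every agenda (balanced or not) under T. -/

import Mathlib

open scoped Classical

/-- An agenda: a binary tree whose leaves are labelled with candidates. -/
inductive Agenda (α : Type) : Type
  | leaf (a : α) : Agenda α
  | node (l r : Agenda α) : Agenda α

namespace Agenda

/-- The list of leaf labels of an agenda. -/
def leaves {α : Type} : Agenda α → List α
  | leaf a => [a]
  | node l r => leaves l ++ leaves r

/-- The list of depths of the leaves of an agenda. -/
def depths {α : Type} : Agenda α → List ℕ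
  | leaf _ => [0]
  | node l r => (depths l ++ depths r).map (· + 1)

end Agenda

/-- A valid agenda: leaves labelled bijectively with the candidates. -/
def IsAgenda {α : Type} [Fintype α] (t : Agenda α) : Prop :=
  t.leaves.Nodup ∧ ∀ a : α, a ∈ t.leaves

/-- A balanced agenda: max and min leaf depths differ by at most 1. -/
def IsBalanced {α : Type} (t : Agenda α) : Prop :=
  ∀ d₁ ∈ t.depths, ∀ d₂ ∈ t.depths, d₁ ≤ d₂ + 1

/-- A tournament: complete asymmetric directed graph on the candidates. -/
def IsTournament {α : Type} (T : α → α → Prop) : Prop :=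
  (∀ a, ¬ T a a) ∧ ∀ a b : α, a ≠ b → (T a b ↔ ¬ T b a)

/-- Winner of an agenda under a tournament: each internal node is won by
whichever child's winner beats the other; the root's candidate wins. -/
noncomputable def winner {α : Type} (T : α → α → Prop) : Agenda α → α
  | .leaf a => a
  | .node l r => if T (winner T l) (winner T r) then winner T l else winner T r

/-- Strict partial order: asymmetric and transitive. -/
def IsSPO {α : Type} (r : α → α → Prop) : Prop :=
  (∀ a b, r a b → ¬ r b a) ∧ (∀ a b c, r a b → r b c → r a c)

/-- Strict total order. -/
def IsSTO {α : Type} (r : α → α → Prop) : Prop :=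
  IsSPO r ∧ ∀ a b : α, a ≠ b → r a b ∨ r b a

/-- An (incomplete) weighted profile: a finite sequence of agents, each with a
positive weight and a strict partial order, the sum of weights being odd. -/
structure Profile (α : Type) where
  agents : List (ℕ × (α → α → Prop))
  pos : ∀ p ∈ agents, 0 < p.1
  spo : ∀ p ∈ agents, IsSPO p.2
  oddSum : Odd (agents.map Prod.fst).sum

/-- Total weight of agents preferring `a` to `b`. -/
noncomputable def prefWeight {α : Type} (P : Profile α) (a b : α) : ℕ :=
  (P.agents.map (fun p => if p.2 a b then p.1 else 0)).sum

/-- The majority graph of a profile. -/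
def maj {α : Type} (P : Profile α) (a b : α) : Prop :=
  prefWeight P b a < prefWeight P a b

/-- `Q` is a completion of `P`: same weights, each agent's partial order is
replaced by a strict total order extending it. -/
def IsCompletion {α : Type} (P Q : Profile α) : Prop :=
  List.Forall₂ (fun p q => p.1 = q.1 ∧ IsSTO q.2 ∧ ∀ a b, p.2 a b → q.2 a b)
    P.agents Q.agents

/-- `T` extends the (incomplete majority) graph `G`. -/
def Extends {α : Type} (G T : α → α → Prop) : Prop := ∀ a b, G a b → T a b

/-- `A` wins some agenda under `T`. -/
def WinsSome {α : Type} [Fintype α] (T : α → α → Prop) (A : α) : Prop :=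
  ∃ t : Agenda α, IsAgenda t ∧ winner T t = A

/-- `A` wins every agenda under `T`. -/
def WinsAll {α : Type} [Fintype α] (T : α → α → Prop) (A : α) : Prop :=
  ∀ t : Agenda α, IsAgenda t → winner T t = A

/-- `A` wins some balanced agenda under `T`. -/
def FWinsSome {α : Type} [Fintype α] (T : α → α → Prop) (A : α) : Prop :=
  ∃ t : Agenda α, IsAgenda t ∧ IsBalanced t ∧ winner T t = A

/-- `A` wins every balanced agenda under `T`. -/
def FWinsAll {α : Type} [Fintype α] (T : α → α → Prop) (A : α) : Prop :=
  ∀ t : Agenda α, IsAgenda t → IsBalanced t → winner T t = A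

/-- Weak possible winner of a profile. -/
def WPp {α : Type} [Fintype α] (P : Profile α) (A : α) : Prop :=
  ∃ Q : Profile α, IsCompletion P Q ∧ WinsSome (maj Q) A

/-- Strong possible winner of a profile. -/
def SPp {α : Type} [Fintype α] (P : Profile α) (A : α) : Prop :=
  ∀ Q : Profile α, IsCompletion P Q → WinsSome (maj Q) A

/-- Weak Condorcet winner of a profile. -/
def WCp {α : Type} [Fintype α] (P : Profile α) (A : α) : Prop :=
  ∃ Q : Profile α, IsCompletion P Q ∧ WinsAll (maj Q) A

/-- Strong Condorcet winner of a profile. -/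
def SCp {α : Type} [Fintype α] (P : Profile α) (A : α) : Prop :=
  ∀ Q : Profile α, IsCompletion P Q → WinsAll (maj Q) A

/-- Weak possible winner of an incomplete majority graph. -/
def WPg {α : Type} [Fintype α] (G : α → α → Prop) (A : α) : Prop :=
  ∃ T : α → α → Prop, IsTournament T ∧ Extends G T ∧ WinsSome T A

/-- Strong possible winner of an incomplete majority graph. -/
def SPg {α : Type} [Fintype α] (G : α → α → Prop) (A : α) : Prop :=
  ∀ T : α → α → Prop, IsTournament T → Extends G T → WinsSome T A

/-- Weak Condorcet winner of an incomplete majority graph. -/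
def WCg {α : Type} [Fintype α] (G : α → α → Prop) (A : α) : Prop :=
  ∃ T : α → α → Prop, IsTournament T ∧ Extends G T ∧ WinsAll T A

/-- Strong Condorcet winner of an incomplete majority graph. -/
def SCg {α : Type} [Fintype α] (G : α → α → Prop) (A : α) : Prop :=
  ∀ T : α → α → Prop, IsTournament T → Extends G T → WinsAll T A

/-- A profile is unweighted if every agent has weight 1. -/
def IsUnweighted {α : Type} (P : Profile α) : Prop :=
  ∀ p ∈ P.agents, p.1 = 1

/-- `Q` is the unweighted profile corresponding to `P`: each agent of
weight `k` is replaced by `k` agents of weight 1 with the same order. -/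
def IsUnwVersion {α : Type} (P Q : Profile α) : Prop :=
  Q.agents = P.agents.flatMap (fun p => List.replicate p.1 (1, p.2))

/-- Fair strong Condorcet winner of a profile (balanced agendas only). -/
def FSCp {α : Type} [Fintype α] (P : Profile α) (A : α) : Prop :=
  ∀ Q : Profile α, IsCompletion P Q → FWinsAll (maj Q) A

/-- Fair weak Condorcet winner of a profile (balanced agendas only). -/
def FWCp {α : Type} [Fintype α] (P : Profile α) (A : α) : Prop :=
  ∃ Q : Profile α, IsCompletion P Q ∧ FWinsAll (maj Q) A

/-- Fair weak possible winner of a profile (balanced agendas only). -/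
def FWPp {α : Type} [Fintype α] (P : Profile α) (A : α) : Prop :=
  ∃ Q : Profile α, IsCompletion P Q ∧ FWinsSome (maj Q) A

/-! ### Auxiliary machinery for `stmt15` -/

namespace Agenda

/-- Build a roughly balanced agenda from a list, with fuel. -/
def buildAux {α : Type} (j : α) : ℕ → List α → Agenda α
  | 0, _ => .leaf j
  | _ + 1, [] => .leaf j
  | _ + 1, [a] => .leaf a
  | k + 1, a :: b :: l =>
      .node (buildAux j k ((a :: b :: l).take ((l.length + 3) / 2)))
            (buildAux j k ((a :: b :: l).drop ((l.length + 3) / 2)))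

lemma leaves_buildAux {α : Type} (j : α) :
    ∀ (k : ℕ) (l : List α), l ≠ [] → l.length ≤ k → (buildAux j k l).leaves = l := by
  intro k
  induction k with
  | zero =>
    intro l h1 h2
    exact absurd (List.length_eq_zero_iff.mp (Nat.le_zero.mp h2)) h1
  | succ k ih =>
    intro l h1 h2
    match l with
    | [a] => rfl
    | a :: b :: l =>
      have hlen : (a :: b :: l).length = l.length + 2 := by simp
      have h2' : l.length + 2 ≤ k + 1 := by omega
      rw [buildAux]
      show ((buildAux j k _).leaves ++ (buildAux j k _).leaves) = _
      rw [ih _ (by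
            intro h
            have := congrArg List.length h
            simp at this)
          (by simp; omega),
        ih _ (by
            intro h
            have := congrArg List.length h
            simp at this
            omega)
          (by simp; omega)]
      exact List.take_append_drop _ _

lemma depths_buildAux {α : Type} (j : α) :
    ∀ (k : ℕ) (l : List α), l ≠ [] → l.length ≤ k →
      ∀ d ∈ (buildAux j k l).depths,
        Nat.log 2 l.length ≤ d ∧ d ≤ Nat.clog 2 l.length := by
  intro k
  induction k with
  | zero =>
    intro l h1 h2
    exact absurd (List.length_eq_zero_iff.mp (Nat.le_zero.mp h2)) h1
  | succ k ih =>
    intro l h1 h2 d hd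
    match l with
    | [a] =>
      simp only [buildAux, depths, List.mem_singleton] at hd
      subst hd
      simp
    | a :: b :: l =>
      set n := (a :: b :: l).length with hn
      have hn2 : n = l.length + 2 := by simp [hn]
      set m := (l.length + 3) / 2 with hm
      have htlen : ((a :: b :: l).take m).length = m := by
        simp; omega
      have hdlen : ((a :: b :: l).drop m).length = n - m := by
        simp; omega
      rw [buildAux] at hd
      simp only [depths, List.mem_map, List.mem_append] at hd
      obtain ⟨d', hd', rfl⟩ := hd
      -- facts about log/clog
      have hclog : Nat.clog 2 n = Nat.clog 2 m + 1 := by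
        have := Nat.clog_of_two_le (b := 2) (n := n) (by norm_num) (by omega)
        rw [this]
        have he : (n + 2 - 1) / 2 = m := by omega
        rw [he]
      have hlog : Nat.log 2 n = Nat.log 2 (n / 2) + 1 := by
        have h1 := Nat.log_div_base 2 n
        have h2 : 0 < Nat.log 2 n := Nat.log_pos (by norm_num) (by omega)
        omega
      cases hd' with
      | inl hL =>
        have := ih _ (by
            intro h
            have := congrArg List.length h
            rw [htlen] at this
            simp at this
            omega)
          (by rw [htlen]; omega) d' hL
        rw [htlen] at this
        constructor
        · -- log n ≤ d' + 1 : log n = log (n/2) + 1 ≤ log m + 1 ≤ d' + 1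
          have hmono : Nat.log 2 (n / 2) ≤ Nat.log 2 m :=
            Nat.log_mono_right (by omega)
          omega
        · rw [hclog]; omega
      | inr hR =>
        have := ih _ (by
            intro h
            have := congrArg List.length h
            rw [hdlen] at this
            simp at this
            omega)
          (by rw [hdlen]; omega) d' hR
        rw [hdlen] at this
        constructor
        · have : Nat.log 2 (n / 2) ≤ d' := by
            have heq : n - m = n / 2 := by omega
            rw [heq] at this
            exact this.1
          omega
        · have hmono : Nat.clog 2 (n - m) ≤ Nat.clog 2 m :=
            Nat.clog_mono_right _ (by omega)
          rw [hclog]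
          omega

lemma winner_mem {α : Type} (T : α → α → Prop) :
    ∀ t : Agenda α, winner T t ∈ t.leaves := by
  intro t
  induction t with
  | leaf a => simp [winner, leaves]
  | node l r ihl ihr =>
    rw [winner]
    simp only [leaves, List.mem_append]
    split
    · exact Or.inl ihl
    · exact Or.inr ihr

lemma winner_buildAux_ne {α : Type} (T : α → α → Prop) (hT : IsTournament T)
    (A B : α) (hne : B ≠ A) (hBA : T B A) :
    ∀ (k : ℕ) (rest : List α), (A :: B :: rest).Nodup →
      (A :: B :: rest).length ≤ k →
      winner T (buildAux A k (A :: B :: rest)) ≠ A := by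
  have hnAB : ¬ T A B := fun h => ((hT.2 A B hne.symm).mp h) hBA
  intro k
  induction k with
  | zero => intro rest _ h2; simp at h2
  | succ k ih =>
    intro rest hnd h2
    match rest with
    | [] =>
      -- tree is node (buildAux A k [A]) (buildAux A k [B])
      rw [buildAux]
      have hk : 1 ≤ k := by simpa using h2
      have hL : (buildAux A k [A]).leaves = [A] := leaves_buildAux A k [A] (by simp) (by simpa)
      have hR : (buildAux A k [B]).leaves = [B] := leaves_buildAux A k [B] (by simp) (by simpa)
      have hwL : winner T (buildAux A k [A]) = A := by
        have := winner_mem T (buildAux A k [A]); rw [hL] at this; simpa using this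
      have hwR : winner T (buildAux A k [B]) = B := by
        have := winner_mem T (buildAux A k [B]); rw [hR] at this; simpa using this
      show winner T (.node (buildAux A k ((A :: B :: ([] : List α)).take _))
        (buildAux A k ((A :: B :: ([] : List α)).drop _))) ≠ A
      simp only [List.length_nil, List.take, List.drop]
      rw [winner, hwL, hwR]
      rw [if_neg hnAB]
      exact hne
    | c :: rest =>
      -- length = rest.length + 3, m = (rest.length + 4)/2 ≥ 2
      rw [buildAux]
      have hc1 : (c :: rest).length = rest.length + 1 := by simp
      have hlen4 : (A :: B :: c :: rest).length = rest.length + 3 := by simp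
      rw [hlen4] at h2
      set m := ((c :: rest).length + 3) / 2 with hm
      have hm' : m = (rest.length + 4) / 2 := by rw [hm, hc1]
      have hm2 : 2 ≤ m := by omega
      obtain ⟨s, hs⟩ : ∃ s, m = s + 2 := ⟨m - 2, by omega⟩
      have htake : (A :: B :: c :: rest).take m = A :: B :: ((c :: rest).take s) := by
        rw [hs]; rfl
      have hdrop : (A :: B :: c :: rest).drop m = (c :: rest).drop s := by
        rw [hs]; rfl
      rw [winner, htake, hdrop]
      have hsubl : (A :: B :: (c :: rest).take s).Sublist (A :: B :: c :: rest) :=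
        (List.take_sublist s (c :: rest)).cons₂ B |>.cons₂ A
      have hndL : (A :: B :: (c :: rest).take s).Nodup := hnd.sublist hsubl
      have hms : m ≤ rest.length + 2 := by omega
      have hwL : winner T (buildAux A k (A :: B :: (c :: rest).take s)) ≠ A := by
        apply ih _ hndL
        simp only [List.length_cons, List.length_take, hc1]
        omega
      have hwR : winner T (buildAux A k ((c :: rest).drop s)) ≠ A := by
        intro hw
        have hmem := winner_mem T (buildAux A k ((c :: rest).drop s))
        have hle : (c :: rest).drop s ≠ [] := by
          intro h
          have := congrArg List.length h
          simp only [List.length_drop, List.length_nil, hc1] at this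
          omega
        rw [leaves_buildAux A k _ hle (by simp only [List.length_drop, hc1]; omega), hw] at hmem
        have : A ∈ (c :: rest) := (List.drop_subset s _) hmem
        have hA_notin : A ∉ B :: c :: rest := by
          have := hnd
          simp only [List.nodup_cons] at this
          exact this.1
        exact hA_notin (by simp [this])
      split
      · exact hwL
      · exact hwR

/-- A candidate beating all others wins every agenda it appears in. -/
lemma condorcet_wins {α : Type} (T : α → α → Prop) (hT : IsTournament T) (A : α)
    (hbeats : ∀ B : α, B ≠ A → T A B) :
    ∀ t : Agenda α, A ∈ t.leaves → winner T t = A := by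
  intro t
  induction t with
  | leaf a => intro h; simp [leaves] at h; simp [winner, h]
  | node l r ihl ihr =>
    intro h
    simp only [leaves, List.mem_append] at h
    rw [winner]
    rcases h with h | h
    · rw [ihl h]
      by_cases hsp : T A (winner T r)
      · rw [if_pos hsp]
      · rw [if_neg hsp]
        by_contra hne
        exact hsp (hbeats _ hne)
    · rw [ihr h]
      by_cases hsp : T (winner T l) A
      · rw [if_pos hsp]
        by_contra hne
        have hne' : winner T l ≠ A := hne
        have := hbeats _ hne'
        exact ((hT.2 A (winner T l) (Ne.symm hne')).mp this) hsp
      · rw [if_neg hsp]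

end Agenda

/-- If a tournament `T` on at least two candidates has a
candidate `A` winning every balanced agenda, then `A` beats every other
candidate in `T`, and hence `A` wins every agenda. -/
theorem stmt15 {α : Type} [Fintype α] (T : α → α → Prop) (hT : IsTournament T)
    (hcard : 2 ≤ Fintype.card α) (A : α) (hA : FWinsAll T A) :
    (∀ B : α, B ≠ A → T A B) ∧ WinsAll T A := by
  have part1 : ∀ B : α, B ≠ A → T A B := by
    intro B hBA
    by_contra hnAB
    have hTBA : T B A := (hT.2 B A hBA).mpr hnAB
    set others := (Finset.univ \ {A, B} : Finset α).toList with hoth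
    set l := A :: B :: others with hl
    have hAno : A ∉ others := by
      simp [hoth, Finset.mem_sdiff]
    have hBno : B ∉ others := by
      simp [hoth, Finset.mem_sdiff]
    have hlnd : l.Nodup := by
      simp only [hl, List.nodup_cons]
      exact ⟨by simp [hAno, hBA.symm], hBno, Finset.nodup_toList _⟩
    have hmem : ∀ a : α, a ∈ l := by
      intro a
      by_cases ha : a = A
      · simp [hl, ha]
      · by_cases hb : a = B
        · simp [hl, hb]
        · simp only [hl, List.mem_cons]
          right; right
          simp [hoth, Finset.mem_sdiff, ha, hb]
    have hlne : l ≠ [] := by simp [hl]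
    set t := Agenda.buildAux A l.length l with htdef
    have hlv : t.leaves = l := Agenda.leaves_buildAux A _ _ hlne le_rfl
    have hAg : IsAgenda t := ⟨hlv ▸ hlnd, fun a => hlv ▸ hmem a⟩
    have hBal : IsBalanced t := by
      intro d1 h1 d2 h2
      have b1 := Agenda.depths_buildAux A _ _ hlne le_rfl d1 h1
      have b2 := Agenda.depths_buildAux A _ _ hlne le_rfl d2 h2
      have hclog_le : Nat.clog 2 l.length ≤ Nat.log 2 l.length + 1 := by
        rw [Nat.clog_le_iff_le_pow (by norm_num)]
        exact (Nat.lt_pow_succ_log_self (by norm_num) _).le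
      omega
    have hwin := hA t hAg hBal
    exact Agenda.winner_buildAux_ne T hT A B hBA hTBA _ others hlnd le_rfl hwin
  exact ⟨part1, fun t ht => Agenda.condorcet_wins T hT A part1 t (ht.2 A)⟩
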